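/- arXiv:math/0701632 — 6 statements merged into one kernel-verified Lean document; each statement's English description precedes it below -/
import Mathlib

section
/- Let N ≥ 1. Let (A_n) be a sequence of N×N real row-stochastic matrices converging entrywise to a row-stochastic matrix A. Assume that the kernel of I − A (acting on column vectors) is exactly the one-dimensional span of the all-ones vector 𝟙 ∈ ℝ^N, and let π be a row vector with πA = π and π𝟙 = 1. Let (B_n) be N×N real matrices such that n·B_n converges entrywise to a matrix B̃ with πB̃𝟙 ≠ 0, and let (V_n) be column vectors in ℝ^N such that n·V_n converges to a vector Ṽ. Then for all sufficiently large n the matrix I − A_n + B_n is invertible, and (I − A_n + B_n)^{−1} V_n converges, as n → ∞, to the vector ((πṼ)/(πB̃𝟙))·𝟙 (i.e., every component converges to the same scalar (πṼ)/(πB̃𝟙)). -/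
open Matrix Filter Topology

private lemma mat_tendsto_iff {N : ℕ} {f : ℕ → Matrix (Fin N) (Fin N) ℝ}
    {L : Matrix (Fin N) (Fin N) ℝ} :
    Tendsto f atTop (𝓝 L) ↔ ∀ i j, Tendsto (fun n => f n i j) atTop (𝓝 (L i j)) := by
  constructor
  · intro h i j
    exact tendsto_pi_nhds.mp (tendsto_pi_nhds.mp h i) j
  · intro h
    apply tendsto_pi_nhds.mpr
    intro i
    rw [tendsto_pi_nhds]
    exact h i

private lemma vec_tendsto_iff {N : ℕ} {f : ℕ → Fin N → ℝ} {L : Fin N → ℝ} :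
    Tendsto f atTop (𝓝 L) ↔ ∀ i, Tendsto (fun n => f n i) atTop (𝓝 (L i)) :=
  tendsto_pi_nhds

private lemma mulVec_tendsto {N : ℕ} {f : ℕ → Matrix (Fin N) (Fin N) ℝ}
    {L : Matrix (Fin N) (Fin N) ℝ} {v : ℕ → Fin N → ℝ} {u : Fin N → ℝ}
    (hf : Tendsto f atTop (𝓝 L)) (hv : Tendsto v atTop (𝓝 u)) :
    Tendsto (fun n => f n *ᵥ v n) atTop (𝓝 (L *ᵥ u)) := by
  rw [vec_tendsto_iff]
  intro i
  simp only [Matrix.mulVec, dotProduct]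
  exact tendsto_finset_sum _ fun j _ =>
    (mat_tendsto_iff.mp hf i j).mul (vec_tendsto_iff.mp hv j)

private lemma dot_tendsto {N : ℕ} (π : Fin N → ℝ) {v : ℕ → Fin N → ℝ} {u : Fin N → ℝ}
    (hv : Tendsto v atTop (𝓝 u)) :
    Tendsto (fun n => π ⬝ᵥ v n) atTop (𝓝 (π ⬝ᵥ u)) := by
  simp only [dotProduct]
  exact tendsto_finset_sum _ fun j _ =>
    tendsto_const_nhds.mul (vec_tendsto_iff.mp hv j)

private lemma inv_tendsto {N : ℕ} {f : ℕ → Matrix (Fin N) (Fin N) ℝ}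
    {L : Matrix (Fin N) (Fin N) ℝ}
    (hf : Tendsto f atTop (𝓝 L)) (hL : L.det ≠ 0) :
    Tendsto (fun n => (f n)⁻¹) atTop (𝓝 L⁻¹) := by
  have hc : ContinuousAt Inv.inv L := by
    apply continuousAt_matrix_inv
    rw [Ring.inverse_eq_inv']
    exact continuousAt_inv₀ hL
  exact Filter.Tendsto.comp hc hf

set_option maxHeartbeats 1000000 in
/-- limit of `(I - Aₙ + Bₙ)⁻¹ Vₙ` for row-stochastic `Aₙ → A` with
one-dimensional kernel of `I - A`, `n·Bₙ → B̃` with `π B̃ 𝟙 ≠ 0`, and `n·Vₙ → Ṽ`. -/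
theorem stochastic_matrix_resolvent_limit
    (N : ℕ) (hN : 1 ≤ N)
    (A : ℕ → Matrix (Fin N) (Fin N) ℝ) (Alim : Matrix (Fin N) (Fin N) ℝ)
    (hAstoch : ∀ n, (∀ i j, 0 ≤ A n i j) ∧ ∀ i, ∑ j, A n i j = 1)
    (hAlimstoch : (∀ i j, 0 ≤ Alim i j) ∧ ∀ i, ∑ j, Alim i j = 1)
    (hAconv : ∀ i j, Tendsto (fun n => A n i j) atTop (𝓝 (Alim i j)))
    (hker : ∀ x : Fin N → ℝ, (1 - Alim) *ᵥ x = 0 ↔ ∃ c : ℝ, x = fun _ => c)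
    (π : Fin N → ℝ) (hπA : π ᵥ* Alim = π) (hπ1 : π ⬝ᵥ (fun _ => (1 : ℝ)) = 1)
    (B : ℕ → Matrix (Fin N) (Fin N) ℝ) (Bt : Matrix (Fin N) (Fin N) ℝ)
    (hB : ∀ i j, Tendsto (fun n : ℕ => (n : ℝ) * B n i j) atTop (𝓝 (Bt i j)))
    (hBt : π ⬝ᵥ (Bt *ᵥ fun _ => (1 : ℝ)) ≠ 0)
    (V : ℕ → Fin N → ℝ) (Vt : Fin N → ℝ)
    (hV : ∀ i, Tendsto (fun n : ℕ => (n : ℝ) * V n i) atTop (𝓝 (Vt i))) :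
    (∃ n₀ : ℕ, ∀ n ≥ n₀, IsUnit (1 - A n + B n).det) ∧
    ∀ i, Tendsto (fun n => ((1 - A n + B n)⁻¹ *ᵥ V n) i) atTop
      (𝓝 ((π ⬝ᵥ Vt) / (π ⬝ᵥ (Bt *ᵥ fun _ => (1 : ℝ))))) := by
  classical
  set e : Fin N → ℝ := fun _ => (1 : ℝ) with he
  set β : ℝ := π ⬝ᵥ (Bt *ᵥ e) with hβ
  set P : Matrix (Fin N) (Fin N) ℝ := Matrix.of (fun _ j => π j) with hP
  have hsumπ : ∑ j, π j = 1 := by simpa [dotProduct, he] using hπ1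
  have hπe : π ⬝ᵥ e = 1 := hπ1
  -- the row sums
  have hAe : ∀ n, A n *ᵥ e = e := by
    intro n; funext i
    simp [Matrix.mulVec, dotProduct, he, (hAstoch n).2 i]
  have hPe : P *ᵥ e = e := by
    funext i
    simp [hP, Matrix.mulVec, dotProduct, he, hsumπ]
  set G : Matrix (Fin N) (Fin N) ℝ := 1 - Alim + P with hG
  set Gn : ℕ → Matrix (Fin N) (Fin N) ℝ := fun n => 1 - A n + P with hGn
  have hGne : ∀ n, Gn n *ᵥ e = e := by
    intro n
    simp only [hGn]
    rw [Matrix.add_mulVec, Matrix.sub_mulVec, Matrix.one_mulVec, hAe, hPe]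
    simp
  have hπP : π ᵥ* P = π := by
    funext j
    simp only [Matrix.vecMul, dotProduct, hP, Matrix.of_apply]
    rw [← Finset.sum_mul, hsumπ, one_mul]
  have hπG : π ᵥ* G = π := by
    rw [hG, Matrix.vecMul_add, Matrix.vecMul_sub, Matrix.vecMul_one, hπA, hπP, sub_self,
      zero_add]
  -- G is invertible
  have hGdet : G.det ≠ 0 := by
    intro h0
    obtain ⟨v, hv, hGv⟩ := (Matrix.exists_mulVec_eq_zero_iff).mpr h0
    have hπv : π ⬝ᵥ v = 0 := by
      have h := congrArg (fun u => π ⬝ᵥ u) hGv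
      simpa [dotProduct_mulVec, hπG] using h
    have hPv : P *ᵥ v = 0 := by
      funext i
      have h : ∑ j, π j * v j = 0 := by simpa [dotProduct] using hπv
      simpa [Matrix.mulVec, dotProduct, hP] using h
    have h1A : (1 - Alim) *ᵥ v = 0 := by
      have h := hGv
      rw [hG, Matrix.add_mulVec, hPv, add_zero] at h
      exact h
    obtain ⟨c, hc⟩ := (hker v).mp h1A
    have hc0 : c = 0 := by
      have h := hπv
      rw [hc] at h
      simpa [dotProduct, ← Finset.sum_mul, hsumπ] using h
    exact hv (by rw [hc, hc0]; funext i; rfl)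
  have hGunit : IsUnit G.det := isUnit_iff_ne_zero.mpr hGdet
  -- convergence of Gn to G and of inverses
  have hGnconv : Tendsto Gn atTop (𝓝 G) := by
    apply mat_tendsto_iff.mpr
    intro i j
    have h : Tendsto (fun n => (1 : Matrix (Fin N) (Fin N) ℝ) i j - A n i j + P i j) atTop
        (𝓝 ((1 : Matrix (Fin N) (Fin N) ℝ) i j - Alim i j + P i j)) :=
      (tendsto_const_nhds.sub (hAconv i j)).add tendsto_const_nhds
    simpa only [hGn, hG, Matrix.add_apply, Matrix.sub_apply] using h
  set Q : Matrix (Fin N) (Fin N) ℝ := G⁻¹ with hQ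
  have hQconv : Tendsto (fun n => (Gn n)⁻¹) atTop (𝓝 Q) := inv_tendsto hGnconv hGdet
  have hdetGn : Tendsto (fun n => (Gn n).det) atTop (𝓝 G.det) :=
    (continuous_id.matrix_det.tendsto G).comp hGnconv
  have hGnunit : ∀ᶠ n in atTop, IsUnit (Gn n).det :=
    (hdetGn.eventually_ne hGdet).mono fun n h => isUnit_iff_ne_zero.mpr h
  have hπQ : π ᵥ* Q = π := by
    have h1 : G * Q = 1 := Matrix.mul_nonsing_inv G hGunit
    calc π ᵥ* Q = (π ᵥ* G) ᵥ* Q := by rw [hπG]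
    _ = π ᵥ* (G * Q) := by rw [Matrix.vecMul_vecMul]
    _ = π := by rw [h1, Matrix.vecMul_one]
  -- B n → 0, V n → 0
  have hinv_nat : Tendsto (fun n : ℕ => ((n : ℝ))⁻¹) atTop (𝓝 0) :=
    tendsto_inv_atTop_zero.comp tendsto_natCast_atTop_atTop
  have hB0 : ∀ i j, Tendsto (fun n => B n i j) atTop (𝓝 0) := by
    intro i j
    have h := hinv_nat.mul (hB i j)
    rw [zero_mul] at h
    apply h.congr'
    filter_upwards [eventually_ge_atTop 1] with n hn
    have hn0 : (n : ℝ) ≠ 0 := Nat.cast_ne_zero.mpr (by omega)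
    rw [← mul_assoc, inv_mul_cancel₀ hn0, one_mul]
  have hV0 : ∀ i, Tendsto (fun n => V n i) atTop (𝓝 0) := by
    intro i
    have h := hinv_nat.mul (hV i)
    rw [zero_mul] at h
    apply h.congr'
    filter_upwards [eventually_ge_atTop 1] with n hn
    have hn0 : (n : ℝ) ≠ 0 := Nat.cast_ne_zero.mpr (by omega)
    rw [← mul_assoc, inv_mul_cancel₀ hn0, one_mul]
  have hBmat : Tendsto B atTop (𝓝 (0 : Matrix (Fin N) (Fin N) ℝ)) :=
    mat_tendsto_iff.mpr (by intro i j; simpa using hB0 i j)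
  have hnBmat : Tendsto (fun n : ℕ => (n : ℝ) • B n) atTop (𝓝 Bt) :=
    mat_tendsto_iff.mpr (by intro i j; simpa [Matrix.smul_apply, smul_eq_mul] using hB i j)
  have hVvec : Tendsto V atTop (𝓝 (0 : Fin N → ℝ)) :=
    vec_tendsto_iff.mpr (by intro i; simpa using hV0 i)
  have hnV : Tendsto (fun n : ℕ => (n : ℝ) • V n) atTop (𝓝 Vt) :=
    vec_tendsto_iff.mpr (by intro i; simpa [Pi.smul_apply, smul_eq_mul] using hV i)
  -- the correction matrices
  set Cn : ℕ → Matrix (Fin N) (Fin N) ℝ := fun n => (Gn n)⁻¹ * B n with hCn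
  have hCn0 : Tendsto Cn atTop (𝓝 (0 : Matrix (Fin N) (Fin N) ℝ)) := by
    have h := hQconv.mul hBmat
    simpa using h
  have hnCn : Tendsto (fun n : ℕ => (n : ℝ) • Cn n) atTop (𝓝 (Q * Bt)) := by
    have h := hQconv.mul hnBmat
    refine h.congr fun n => ?_
    simp only [hCn]
    rw [Matrix.mul_smul]
  set Un : ℕ → Matrix (Fin N) (Fin N) ℝ := fun n => 1 + Cn n with hUn
  have hUnconv : Tendsto Un atTop (𝓝 (1 : Matrix (Fin N) (Fin N) ℝ)) := by
    have h := (tendsto_const_nhds (x := (1 : Matrix (Fin N) (Fin N) ℝ)) (f := atTop (α := ℕ))).add hCn0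
    simpa using h
  have hdetUn : Tendsto (fun n => (Un n).det) atTop (𝓝 1) := by
    have h := (continuous_id.matrix_det.tendsto (1 : Matrix (Fin N) (Fin N) ℝ)).comp hUnconv
    simpa [Function.comp_def] using h
  have hUnunit : ∀ᶠ n in atTop, IsUnit (Un n).det :=
    (hdetUn.eventually_ne one_ne_zero).mono fun n h => isUnit_iff_ne_zero.mpr h
  have hRn : Tendsto (fun n => (Un n)⁻¹) atTop (𝓝 (1 : Matrix (Fin N) (Fin N) ℝ)) := by
    have h := inv_tendsto hUnconv (by simp)
    simpa using h
  -- w and y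
  set w : ℕ → Fin N → ℝ := fun n => (Un n)⁻¹ *ᵥ e with hw
  have hwconv : Tendsto w atTop (𝓝 e) := by
    have h := mulVec_tendsto hRn (tendsto_const_nhds (x := e))
    simpa only [Matrix.one_mulVec] using h
  set y : ℕ → Fin N → ℝ := fun n => (Un n)⁻¹ *ᵥ ((Gn n)⁻¹ *ᵥ V n) with hy
  have hy0 : Tendsto y atTop (𝓝 (0 : Fin N → ℝ)) := by
    have h := mulVec_tendsto hRn (mulVec_tendsto hQconv hVvec)
    simpa only [Matrix.mulVec_zero] using h
  have hny : Tendsto (fun n : ℕ => (n : ℝ) • y n) atTop (𝓝 (Q *ᵥ Vt)) := by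
    have h := mulVec_tendsto hRn (mulVec_tendsto hQconv hnV)
    have h2 : ∀ n : ℕ, (Un n)⁻¹ *ᵥ ((Gn n)⁻¹ *ᵥ ((n : ℝ) • V n)) = (n : ℝ) • y n := by
      intro n
      simp only [hy]
      rw [Matrix.mulVec_smul, Matrix.mulVec_smul]
    have h3 := h.congr h2
    simpa only [Matrix.one_mulVec] using h3
  -- key eventual identities under invertibility of Un
  have hUnw : ∀ n, IsUnit (Un n).det → Un n *ᵥ w n = e := by
    intro n hUu
    simp only [hw]
    rw [Matrix.mulVec_mulVec, Matrix.mul_nonsing_inv _ hUu, Matrix.one_mulVec]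
  have hCnw : ∀ n, IsUnit (Un n).det → Cn n *ᵥ w n = e - w n := by
    intro n hUu
    have h4 := hUnw n hUu
    simp only [hUn] at h4
    rw [Matrix.add_mulVec, Matrix.one_mulVec] at h4
    exact eq_sub_of_add_eq' h4
  -- the scalar t n = n (1 - π w n) converges to β
  set t : ℕ → ℝ := fun n : ℕ => (n : ℝ) * (1 - π ⬝ᵥ w n) with ht_def
  have hβQ : π ⬝ᵥ ((Q * Bt) *ᵥ e) = β := by
    rw [← Matrix.mulVec_mulVec, dotProduct_mulVec, hπQ, hβ]
  have ht : Tendsto t atTop (𝓝 β) := by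
    have h := dot_tendsto π (mulVec_tendsto hnCn hwconv)
    rw [hβQ] at h
    apply h.congr'
    filter_upwards [hUnunit] with n hUu
    rw [Matrix.smul_mulVec, dotProduct_smul, hCnw n hUu,
      dotProduct_sub, hπe, smul_eq_mul, ht_def]
  have hβ0 : β ≠ 0 := hBt
  have htne : ∀ᶠ n in atTop, t n ≠ 0 := ht.eventually_ne hβ0
  -- the scalar ρ n converges
  set ρ : ℕ → ℝ := fun n : ℕ => ((n : ℝ) * (π ⬝ᵥ y n)) / t n with hρ_def
  have hnum : Tendsto (fun n : ℕ => (n : ℝ) * (π ⬝ᵥ y n)) atTop (𝓝 (π ⬝ᵥ Vt)) := by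
    have h := dot_tendsto π hny
    have h2 : π ⬝ᵥ (Q *ᵥ Vt) = π ⬝ᵥ Vt := by
      rw [dotProduct_mulVec, hπQ]
    rw [h2] at h
    apply h.congr fun n => ?_
    rw [dotProduct_smul, smul_eq_mul]
  have hρ : Tendsto ρ atTop (𝓝 ((π ⬝ᵥ Vt) / β)) := hnum.div ht hβ0
  -- main eventual claim
  have hmain : ∀ᶠ n in atTop, IsUnit (1 - A n + B n).det ∧
      ∀ i, ((1 - A n + B n)⁻¹ *ᵥ V n) i = y n i + ρ n * w n i := by
    filter_upwards [hGnunit, hUnunit, htne, eventually_ge_atTop 1] with n hGu hUu htn hn1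
    have hn0 : (n : ℝ) ≠ 0 := Nat.cast_ne_zero.mpr (by omega)
    have hne : 1 - π ⬝ᵥ w n ≠ 0 := by
      intro h
      exact htn (by rw [ht_def]; simp only []; rw [h, mul_zero])
    set c : ℝ := (1 - π ⬝ᵥ w n)⁻¹ with hc
    set W : Matrix (Fin N) (Fin N) ℝ := Matrix.vecMulVec (w n) π with hW
    -- Un n * W = P
    have key2 : Un n * W = P := by
      funext i j
      have h1 : (Un n * W) i j = (Un n *ᵥ w n) i * π j := by
        simp only [Matrix.mul_apply, hW, Matrix.vecMulVec_apply, Matrix.mulVec,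
          dotProduct, Finset.sum_mul]
        exact Finset.sum_congr rfl fun k _ => by ring
      rw [h1, hUnw n hUu]
      simp [hP, he]
    -- Gn n * P = P
    have hGnP : Gn n * P = P := by
      funext i j
      have h1 : (Gn n * P) i j = (Gn n *ᵥ e) i * π j := by
        simp only [Matrix.mul_apply, hP, Matrix.of_apply, Matrix.mulVec, dotProduct,
          he, Finset.sum_mul]
        exact Finset.sum_congr rfl fun k _ => by ring
      rw [h1, hGne n]
      simp [hP, he]
    have hGnCn : Gn n * Cn n = B n := by
      show Gn n * ((Gn n)⁻¹ * B n) = B n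
      rw [← Matrix.mul_assoc, Matrix.mul_nonsing_inv _ hGu, Matrix.one_mul]
    -- factorization
    have hfact : 1 - A n + B n = Gn n * Un n * (1 - W) := by
      have h2 : Gn n * Un n = Gn n + B n := by
        show Gn n * (1 + Cn n) = Gn n + B n
        rw [Matrix.mul_add, Matrix.mul_one, hGnCn]
      calc 1 - A n + B n = (Gn n + B n) - P := by
            simp only [hGn]; abel
      _ = Gn n * Un n - Gn n * (Un n * W) := by
            rw [h2, key2, hGnP]
      _ = Gn n * Un n * (1 - W) := by
            rw [Matrix.mul_sub, Matrix.mul_one, Matrix.mul_assoc]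
    -- inverse of 1 - W
    have hWW : W * W = (π ⬝ᵥ w n) • W := by
      funext i j
      simp only [Matrix.mul_apply, hW, Matrix.vecMulVec_apply, Matrix.smul_apply,
        smul_eq_mul, dotProduct, Finset.sum_mul]
      exact Finset.sum_congr rfl fun k _ => by ring
    have hinvW : (1 - W) * (1 + c • W) = 1 := by
      have h1 : c * (1 - π ⬝ᵥ w n) = 1 := inv_mul_cancel₀ hne
      have hkey : c • W - W - (c * (π ⬝ᵥ w n)) • W = 0 := by
        have h2 : c - 1 - c * (π ⬝ᵥ w n) = 0 := by linear_combination h1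
        calc c • W - W - (c * (π ⬝ᵥ w n)) • W = (c - 1 - c * (π ⬝ᵥ w n)) • W := by
              rw [sub_smul, sub_smul, one_smul]
        _ = 0 := by rw [h2, zero_smul]
      calc (1 - W) * (1 + c • W)
          = 1 + (c • W - W - (c * (π ⬝ᵥ w n)) • W) := by
            simp only [Matrix.sub_mul, Matrix.mul_add, Matrix.one_mul, Matrix.mul_one,
              Matrix.mul_smul, hWW, smul_smul]
            module
      _ = 1 := by rw [hkey, add_zero]
    have hWunit : IsUnit (1 - W).det := Matrix.isUnit_det_of_right_inverse hinvW
    have hWinv : (1 - W)⁻¹ = 1 + c • W := Matrix.inv_eq_right_inv hinvW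
    constructor
    · rw [hfact, Matrix.det_mul, Matrix.det_mul]
      exact (hGu.mul hUu).mul hWunit
    · intro i
      have hMinv : (1 - A n + B n)⁻¹ = (1 + c • W) * ((Un n)⁻¹ * (Gn n)⁻¹) := by
        rw [hfact, Matrix.mul_inv_rev, Matrix.mul_inv_rev, hWinv]
      have hvec : (1 - A n + B n)⁻¹ *ᵥ V n = (1 + c • W) *ᵥ y n := by
        rw [hMinv, ← Matrix.mulVec_mulVec, ← Matrix.mulVec_mulVec]
      have hWy : (W *ᵥ y n) i = w n i * (π ⬝ᵥ y n) := by
        simp only [hW, Matrix.mulVec, Matrix.vecMulVec_apply, dotProduct,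
          Finset.mul_sum]
        exact Finset.sum_congr rfl fun k _ => by ring
      have hρn : ρ n = c * (π ⬝ᵥ y n) := by
        rw [hρ_def]
        simp only [ht_def]
        rw [mul_div_mul_left _ _ hn0, div_eq_inv_mul, hc]
      rw [hvec, Matrix.add_mulVec, Matrix.one_mulVec, Matrix.smul_mulVec]
      simp only [Pi.add_apply, Pi.smul_apply, smul_eq_mul]
      rw [hWy, hρn]
      ring
  -- conclude
  constructor
  · obtain ⟨n₀, hn₀⟩ := eventually_atTop.mp (hmain.mono fun n h => h.1)
    exact ⟨n₀, hn₀⟩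
  · intro i
    have hlim : Tendsto (fun n => y n i + ρ n * w n i) atTop
        (𝓝 (0 + (π ⬝ᵥ Vt) / β * 1)) := by
      refine Tendsto.add ?_ (hρ.mul ?_)
      · simpa only [Pi.zero_apply] using vec_tendsto_iff.mp hy0 i
      · have h := vec_tendsto_iff.mp hwconv i
        simpa only [he] using h
    rw [zero_add, mul_one] at hlim
    apply hlim.congr'
    filter_upwards [hmain] with n hmn
    exact (hmn.2 i).symm
end

section
/- Let N ≥ 1. Let (A_n) be a sequence of N×N real row-stochastic matrices converging entrywise to a row-stochastic matrix A. Assume that the kernel of I − A (acting on column vectors) is exactly the one-dimensional span of the all-ones vector 𝟙 ∈ ℝ^N, and let π be a row vector with πA = π and π𝟙 = 1. Let (B_n) be N×N real matrices such that n·B_n converges entrywise to a matrix B̃ with πB̃𝟙 ≠ 0, and let (V_n) be column vectors in ℝ^N such that n·V_n converges to a vector Ṽ. Then for all sufficiently large n the matrix I − A_n + B_n is invertible, and (I − A_n + B_n)^{−1} V_n converges, as n → ∞, to the vector ((πṼ)/(πB̃𝟙))·𝟙 (i.e., every component converges to the same scalar (πṼ)/(πB̃𝟙)). -/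
open Matrix Filter Topology

namespace StochResolventAux

variable {N : ℕ}

/-- Entrywise limit of `M n *ᵥ v n`. -/
lemma tendsto_mulVec_entry
    {M : ℕ → Matrix (Fin N) (Fin N) ℝ} {Ml : Matrix (Fin N) (Fin N) ℝ}
    (hM : Tendsto M atTop (𝓝 Ml))
    {v : ℕ → Fin N → ℝ} {vl : Fin N → ℝ}
    (hv : ∀ i, Tendsto (fun n => v n i) atTop (𝓝 (vl i))) (i : Fin N) :
    Tendsto (fun n => (M n *ᵥ v n) i) atTop (𝓝 ((Ml *ᵥ vl) i)) := by
  have hM' : ∀ i j, Tendsto (fun n => M n i j) atTop (𝓝 (Ml i j)) := by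
    intro i j
    have h1 := (tendsto_pi_nhds (f := M)).mp hM i
    exact (tendsto_pi_nhds).mp h1 j
  simp only [Matrix.mulVec, dotProduct]
  exact tendsto_finset_sum _ fun j _ => (hM' i j).mul (hv j)

/-- Limit of `π ⬝ᵥ (M n *ᵥ v n)`. -/
lemma tendsto_dot_mulVec (π : Fin N → ℝ)
    {M : ℕ → Matrix (Fin N) (Fin N) ℝ} {Ml : Matrix (Fin N) (Fin N) ℝ}
    (hM : Tendsto M atTop (𝓝 Ml))
    {v : ℕ → Fin N → ℝ} {vl : Fin N → ℝ}
    (hv : ∀ i, Tendsto (fun n => v n i) atTop (𝓝 (vl i))) :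
    Tendsto (fun n => π ⬝ᵥ (M n *ᵥ v n)) atTop (𝓝 (π ⬝ᵥ (Ml *ᵥ vl))) := by
  simp only [dotProduct]
  exact tendsto_finset_sum _ fun i _ =>
    tendsto_const_nhds.mul (tendsto_mulVec_entry hM hv i)

lemma mul_vecMulVec (M : Matrix (Fin N) (Fin N) ℝ) (u v : Fin N → ℝ) :
    M * vecMulVec u v = vecMulVec (M *ᵥ u) v := by
  ext i j
  simp only [Matrix.mul_apply, Matrix.vecMulVec_apply, Matrix.mulVec, dotProduct,
    Finset.sum_mul, mul_assoc]

lemma vecMulVec_mul_vecMulVec (u v u' v' : Fin N → ℝ) :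
    vecMulVec u v * vecMulVec u' v' = (v ⬝ᵥ u') • vecMulVec u v' := by
  ext i j
  simp only [Matrix.mul_apply, Matrix.vecMulVec_apply, Matrix.smul_apply, smul_eq_mul,
    dotProduct, Finset.sum_mul]
  exact Finset.sum_congr rfl fun k _ => by ring

lemma vecMulVec_mulVec (u v w : Fin N → ℝ) :
    vecMulVec u v *ᵥ w = (v ⬝ᵥ w) • u := by
  funext i
  simp only [Matrix.mulVec, Matrix.vecMulVec_apply, dotProduct, Pi.smul_apply,
    smul_eq_mul, Finset.sum_mul]
  exact Finset.sum_congr rfl fun k _ => by ring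

end StochResolventAux

open StochResolventAux

set_option maxHeartbeats 2000000 in
/-- limit of `(I - Aₙ + Bₙ)⁻¹ Vₙ` for row-stochastic `Aₙ → A` with
one-dimensional kernel of `I - A`, `n·Bₙ → B̃` with `π B̃ 𝟙 ≠ 0`, and `n·Vₙ → Ṽ`. -/
theorem stochastic_matrix_resolvent_limit'
    (N : ℕ) (hN : 1 ≤ N)
    (A : ℕ → Matrix (Fin N) (Fin N) ℝ) (Alim : Matrix (Fin N) (Fin N) ℝ)
    (hAstoch : ∀ n, (∀ i j, 0 ≤ A n i j) ∧ ∀ i, ∑ j, A n i j = 1)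
    (hAlimstoch : (∀ i j, 0 ≤ Alim i j) ∧ ∀ i, ∑ j, Alim i j = 1)
    (hAconv : ∀ i j, Tendsto (fun n => A n i j) atTop (𝓝 (Alim i j)))
    (hker : ∀ x : Fin N → ℝ, (1 - Alim) *ᵥ x = 0 ↔ ∃ c : ℝ, x = fun _ => c)
    (π : Fin N → ℝ) (hπA : π ᵥ* Alim = π) (hπ1 : π ⬝ᵥ (fun _ => (1 : ℝ)) = 1)
    (B : ℕ → Matrix (Fin N) (Fin N) ℝ) (Bt : Matrix (Fin N) (Fin N) ℝ)
    (hB : ∀ i j, Tendsto (fun n : ℕ => (n : ℝ) * B n i j) atTop (𝓝 (Bt i j)))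
    (hBt : π ⬝ᵥ (Bt *ᵥ fun _ => (1 : ℝ)) ≠ 0)
    (V : ℕ → Fin N → ℝ) (Vt : Fin N → ℝ)
    (hV : ∀ i, Tendsto (fun n : ℕ => (n : ℝ) * V n i) atTop (𝓝 (Vt i))) :
    (∃ n₀ : ℕ, ∀ n ≥ n₀, IsUnit (1 - A n + B n).det) ∧
    ∀ i, Tendsto (fun n => ((1 - A n + B n)⁻¹ *ᵥ V n) i) atTop
      (𝓝 ((π ⬝ᵥ Vt) / (π ⬝ᵥ (Bt *ᵥ fun _ => (1 : ℝ))))) := by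
  classical
  set one : Fin N → ℝ := fun _ => (1 : ℝ) with hone_def
  set Q : Matrix (Fin N) (Fin N) ℝ := vecMulVec one π with hQ_def
  set L : Matrix (Fin N) (Fin N) ℝ := 1 - Alim + Q with hL_def
  set G : ℕ → Matrix (Fin N) (Fin N) ℝ := fun n => 1 - A n + B n + Q with hG_def
  -- basic algebraic facts
  have hπone : π ⬝ᵥ one = 1 := hπ1
  have hπsum : (∑ i, π i) = 1 := by
    simpa [dotProduct, hone_def] using hπ1
  have hAone : ∀ n, A n *ᵥ one = one := by
    intro n; funext i
    simp only [Matrix.mulVec, dotProduct, hone_def, mul_one]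
    exact (hAstoch n).2 i
  have hAlimone : Alim *ᵥ one = one := by
    funext i
    simp only [Matrix.mulVec, dotProduct, hone_def, mul_one]
    exact hAlimstoch.2 i
  have hQmulVec : ∀ x : Fin N → ℝ, Q *ᵥ x = (π ⬝ᵥ x) • one := fun x =>
    vecMulVec_mulVec one π x
  have hQone : Q *ᵥ one = one := by rw [hQmulVec one, hπone, one_smul]
  have hLone : L *ᵥ one = one := by
    rw [hL_def, Matrix.add_mulVec, Matrix.sub_mulVec, Matrix.one_mulVec, hAlimone, hQone]
    simp
  have hπQ : π ᵥ* Q = π := by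
    funext j
    simp only [Matrix.vecMul, dotProduct, hQ_def, Matrix.vecMulVec_apply, hone_def,
      one_mul]
    rw [← Finset.sum_mul, hπsum, one_mul]
  have hπL : π ᵥ* L = π := by
    rw [hL_def, Matrix.vecMul_add, Matrix.vecMul_sub, Matrix.vecMul_one, hπA, hπQ]
    simp
  -- L is invertible
  have hLdet : L.det ≠ 0 := by
    intro hdet
    obtain ⟨v, hv0, hv⟩ := (Matrix.exists_mulVec_eq_zero_iff).mpr hdet
    have hπv : π ⬝ᵥ v = 0 := by
      have h1 : π ⬝ᵥ (L *ᵥ v) = 0 := by rw [hv]; simp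
      rwa [Matrix.dotProduct_mulVec, hπL] at h1
    have hIA : (1 - Alim) *ᵥ v = 0 := by
      have h2 : L *ᵥ v = (1 - Alim) *ᵥ v + (π ⬝ᵥ v) • one := by
        rw [hL_def, Matrix.add_mulVec, hQmulVec v]
      rw [hv, hπv, zero_smul, add_zero] at h2
      exact h2.symm
    obtain ⟨c, hc⟩ := (hker v).mp hIA
    have hcz : c = 0 := by
      have : π ⬝ᵥ v = c := by
        rw [hc]
        simp only [dotProduct]
        rw [← Finset.sum_mul, hπsum, one_mul]
      rw [hπv] at this; exact this.symm
    exact hv0 (by rw [hc, hcz]; rfl)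
  have hLunit : IsUnit L.det := isUnit_iff_ne_zero.mpr hLdet
  have hLinv_one : L⁻¹ *ᵥ one = one := by
    conv_lhs => rw [← hLone]
    rw [Matrix.mulVec_mulVec, Matrix.nonsing_inv_mul L hLunit, Matrix.one_mulVec]
  have hπLinv : π ᵥ* L⁻¹ = π := by
    conv_lhs => rw [← hπL]
    rw [Matrix.vecMul_vecMul, Matrix.mul_nonsing_inv L hLunit, Matrix.vecMul_one]
  -- convergence of G to L
  have hBzero : ∀ i j, Tendsto (fun n => B n i j) atTop (𝓝 0) := by
    intro i j
    have h0 : Tendsto (fun n : ℕ => ((n : ℝ))⁻¹ * ((n : ℝ) * B n i j)) atTop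
        (𝓝 (0 * Bt i j)) :=
      (tendsto_inv_atTop_zero.comp tendsto_natCast_atTop_atTop).mul (hB i j)
    rw [zero_mul] at h0
    refine h0.congr' ?_
    filter_upwards [eventually_ge_atTop 1] with n hn
    have hn0 : (n : ℝ) ≠ 0 := Nat.cast_ne_zero.mpr (by omega)
    field_simp
  have hVzero : ∀ i, Tendsto (fun n => V n i) atTop (𝓝 0) := by
    intro i
    have h0 : Tendsto (fun n : ℕ => ((n : ℝ))⁻¹ * ((n : ℝ) * V n i)) atTop
        (𝓝 (0 * Vt i)) :=
      (tendsto_inv_atTop_zero.comp tendsto_natCast_atTop_atTop).mul (hV i)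
    rw [zero_mul] at h0
    refine h0.congr' ?_
    filter_upwards [eventually_ge_atTop 1] with n hn
    have hn0 : (n : ℝ) ≠ 0 := Nat.cast_ne_zero.mpr (by omega)
    field_simp
  have hGconv : Tendsto G atTop (𝓝 L) := by
    apply tendsto_pi_nhds.mpr
    intro i
    rw [tendsto_pi_nhds]
    intro j
    have h1 : Tendsto (fun n => (1 : Matrix (Fin N) (Fin N) ℝ) i j - A n i j + B n i j
        + Q i j) atTop (𝓝 ((1 : Matrix (Fin N) (Fin N) ℝ) i j - Alim i j + 0 + Q i j)) :=
      (((tendsto_const_nhds.sub (hAconv i j)).add (hBzero i j)).add tendsto_const_nhds)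
    rw [add_zero] at h1
    have h3 : L i j = (1 : Matrix (Fin N) (Fin N) ℝ) i j - Alim i j + Q i j := by
      simp [hL_def, Matrix.add_apply, Matrix.sub_apply]
    rw [h3]
    refine h1.congr fun n => ?_
    simp [hG_def, Matrix.add_apply, Matrix.sub_apply]
  have hGinv : Tendsto (fun n => (G n)⁻¹) atTop (𝓝 L⁻¹) := by
    have hc : ContinuousAt Inv.inv L := by
      apply continuousAt_matrix_inv
      rw [Ring.inverse_eq_inv']
      exact continuousAt_inv₀ hLdet
    exact hc.tendsto.comp hGconv
  -- determinant convergence : G n is eventually invertible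
  have hGdetconv : Tendsto (fun n => (G n).det) atTop (𝓝 L.det) :=
    ((continuous_id.matrix_det).tendsto L).comp hGconv
  have hGunit : ∀ᶠ n in atTop, IsUnit (G n).det :=
    (hGdetconv.eventually_ne hLdet).mono fun n h => isUnit_iff_ne_zero.mpr h
  -- the scalar t n and its scaled limit
  set t : ℕ → ℝ := fun n => π ⬝ᵥ ((G n)⁻¹ *ᵥ (B n *ᵥ one)) with ht_def
  set u : ℕ → Fin N → ℝ := fun n => (G n)⁻¹ *ᵥ one with hu_def
  set w : ℕ → Fin N → ℝ := fun n => (G n)⁻¹ *ᵥ V n with hw_def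
  have hnBone : ∀ i, Tendsto (fun n : ℕ => ((n : ℝ) • (B n *ᵥ one)) i) atTop
      (𝓝 ((Bt *ᵥ one) i)) := by
    intro i
    simp only [Pi.smul_apply, smul_eq_mul, Matrix.mulVec, dotProduct, hone_def,
      mul_one, Finset.mul_sum]
    exact tendsto_finset_sum _ fun j _ => hB i j
  have hnt : Tendsto (fun n : ℕ => (n : ℝ) * t n) atTop (𝓝 (π ⬝ᵥ (Bt *ᵥ one))) := by
    have h1 : Tendsto (fun n : ℕ => π ⬝ᵥ ((G n)⁻¹ *ᵥ ((n : ℝ) • (B n *ᵥ one)))) atTop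
        (𝓝 (π ⬝ᵥ (L⁻¹ *ᵥ (Bt *ᵥ one)))) :=
      tendsto_dot_mulVec π hGinv hnBone
    have h2 : π ⬝ᵥ (L⁻¹ *ᵥ (Bt *ᵥ one)) = π ⬝ᵥ (Bt *ᵥ one) := by
      rw [Matrix.dotProduct_mulVec, hπLinv]
    rw [h2] at h1
    refine h1.congr fun n => ?_
    rw [Matrix.mulVec_smul, dotProduct_smul, smul_eq_mul]
  have htne : ∀ᶠ n in atTop, t n ≠ 0 := by
    filter_upwards [hnt.eventually_ne hBt, eventually_ge_atTop 1] with n h1 _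
    intro h; rw [h, mul_zero] at h1; exact h1 rfl
  -- limits of u, w, π ⬝ᵥ w
  have hu_lim : ∀ i, Tendsto (fun n => u n i) atTop (𝓝 1) := by
    intro i
    have h1 := tendsto_mulVec_entry hGinv (v := fun _ => one) (vl := one)
      (fun j => tendsto_const_nhds) i
    rw [hLinv_one] at h1
    exact h1
  have hw_lim : ∀ i, Tendsto (fun n => w n i) atTop (𝓝 0) := by
    intro i
    have h1 := tendsto_mulVec_entry hGinv (v := V) (vl := 0) (fun j => hVzero j) i
    rw [Matrix.mulVec_zero] at h1
    exact h1
  have hnπw : Tendsto (fun n : ℕ => (n : ℝ) * (π ⬝ᵥ w n)) atTop (𝓝 (π ⬝ᵥ Vt)) := by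
    have hnV : ∀ i, Tendsto (fun n : ℕ => ((n : ℝ) • V n) i) atTop (𝓝 (Vt i)) := by
      intro i
      simpa [Pi.smul_apply, smul_eq_mul] using hV i
    have h1 : Tendsto (fun n : ℕ => π ⬝ᵥ ((G n)⁻¹ *ᵥ ((n : ℝ) • V n))) atTop
        (𝓝 (π ⬝ᵥ (L⁻¹ *ᵥ Vt))) := tendsto_dot_mulVec π hGinv hnV
    have h2 : π ⬝ᵥ (L⁻¹ *ᵥ Vt) = π ⬝ᵥ Vt := by
      rw [Matrix.dotProduct_mulVec, hπLinv]
    rw [h2] at h1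
    refine h1.congr fun n => ?_
    rw [Matrix.mulVec_smul, dotProduct_smul, smul_eq_mul]
  -- the ratio limit
  have hratio : Tendsto (fun n => (π ⬝ᵥ w n) / t n) atTop
      (𝓝 ((π ⬝ᵥ Vt) / (π ⬝ᵥ (Bt *ᵥ one)))) := by
    have h1 : Tendsto (fun n : ℕ => ((n : ℝ) * (π ⬝ᵥ w n)) / ((n : ℝ) * t n)) atTop
        (𝓝 ((π ⬝ᵥ Vt) / (π ⬝ᵥ (Bt *ᵥ one)))) := hnπw.div hnt hBt
    refine h1.congr' ?_
    filter_upwards [eventually_ge_atTop 1] with n hn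
    have hn0 : (n : ℝ) ≠ 0 := Nat.cast_ne_zero.mpr (by omega)
    rw [mul_div_mul_left _ _ hn0]
  -- the key eventual identity
  have hkey : ∀ᶠ n in atTop, IsUnit (1 - A n + B n).det ∧
      ∀ i, ((1 - A n + B n)⁻¹ *ᵥ V n) i = w n i + ((π ⬝ᵥ w n) / t n) * u n i := by
    filter_upwards [hGunit, htne] with n hU htn
    have hGG : (G n)⁻¹ * G n = 1 := Matrix.nonsing_inv_mul _ hU
    have hGG' : G n * (G n)⁻¹ = 1 := Matrix.mul_nonsing_inv _ hU
    have hGu : G n *ᵥ u n = one := by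
      rw [hu_def]
      rw [Matrix.mulVec_mulVec, hGG', Matrix.one_mulVec]
    have hGone : G n *ᵥ one = B n *ᵥ one + one := by
      rw [hG_def]
      show (1 - A n + B n + Q) *ᵥ one = _
      rw [Matrix.add_mulVec, Matrix.add_mulVec, Matrix.sub_mulVec, Matrix.one_mulVec,
        hAone n, hQone]
      simp
    have hone_split : one = (G n)⁻¹ *ᵥ (B n *ᵥ one) + u n := by
      have h1 : (G n)⁻¹ *ᵥ (G n *ᵥ one) = one := by
        rw [Matrix.mulVec_mulVec, hGG, Matrix.one_mulVec]
      rw [hGone, Matrix.mulVec_add] at h1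
      exact h1.symm
    have hst : 1 - π ⬝ᵥ u n = t n := by
      have h1 : π ⬝ᵥ one = t n + π ⬝ᵥ u n := by
        conv_lhs => rw [hone_split]
        rw [dotProduct_add, ht_def]
      rw [hπone] at h1
      linarith
    -- the explicit right inverse
    set c : ℝ := (t n)⁻¹ with hc_def
    set U : Matrix (Fin N) (Fin N) ℝ := vecMulVec (u n) π with hU_def
    have hGU : G n * U = Q := by
      rw [hU_def, StochResolventAux.mul_vecMulVec, hGu, hQ_def]
    have hQU : Q * U = (π ⬝ᵥ u n) • Q := by
      rw [hQ_def, hU_def, StochResolventAux.vecMulVec_mul_vecMulVec]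
    have hcπu : c * (π ⬝ᵥ u n) = c - 1 := by
      have hct : c * t n = 1 := inv_mul_cancel₀ htn
      have h2 : π ⬝ᵥ u n = 1 - t n := by linarith
      rw [h2, mul_sub, mul_one, hct]
    have hM_eq : (1 - A n + B n) = G n - Q := by
      rw [hG_def]
      show _ = 1 - A n + B n + Q - Q
      abel
    have hfact : (G n - Q) * (1 + c • U) = G n := by
      rw [Matrix.sub_mul, Matrix.mul_add, Matrix.mul_add, Matrix.mul_one, Matrix.mul_one,
        Matrix.mul_smul, Matrix.mul_smul, hGU, hQU, smul_smul, hcπu, sub_smul, one_smul]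
      abel
    have hMR : (1 - A n + B n) * ((1 + c • U) * (G n)⁻¹) = 1 := by
      rw [hM_eq, ← Matrix.mul_assoc, hfact, hGG']
    refine ⟨Matrix.isUnit_det_of_right_inverse hMR, ?_⟩
    intro i
    have hinv : (1 - A n + B n)⁻¹ = (1 + c • U) * (G n)⁻¹ :=
      Matrix.inv_eq_right_inv hMR
    rw [hinv, ← Matrix.mulVec_mulVec]
    have hform : (1 + c • U) *ᵥ ((G n)⁻¹ *ᵥ V n) = w n + (c * (π ⬝ᵥ w n)) • u n := by
      rw [Matrix.add_mulVec, Matrix.one_mulVec, Matrix.smul_mulVec, hU_def,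
        StochResolventAux.vecMulVec_mulVec, smul_smul, hw_def]
    rw [hform]
    simp only [Pi.add_apply, Pi.smul_apply, smul_eq_mul, hc_def]
    ring
  constructor
  · obtain ⟨n₀, hn₀⟩ := eventually_atTop.mp hkey
    exact ⟨n₀, fun n hn => (hn₀ n hn).1⟩
  · intro i
    have hlim : Tendsto (fun n => w n i + ((π ⬝ᵥ w n) / t n) * u n i) atTop
        (𝓝 (0 + ((π ⬝ᵥ Vt) / (π ⬝ᵥ (Bt *ᵥ one))) * 1)) :=
      (hw_lim i).add (hratio.mul (hu_lim i))
    rw [zero_add, mul_one] at hlim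
    have : (π ⬝ᵥ (Bt *ᵥ one)) = π ⬝ᵥ (Bt *ᵥ fun _ => (1 : ℝ)) := rfl
    rw [this] at hlim
    refine hlim.congr' ?_
    filter_upwards [hkey] with n hn
    exact (hn.2 i).symm
end

section
/- Let N ≥ 2. Suppose: (β_n) ⊆ ℝ with n·β_n → β ≠ 0; row vectors b_n ∈ ℝ^{N−1} and column vectors c_n ∈ ℝ^{N−1} such that the sequences n·b_n and n·c_n are bounded; (N−1)×(N−1) matrices D_n converging entrywise to an invertible matrix D; scalars v_n with n·v_n → v ∈ ℝ; and vectors w_n ∈ ℝ^{N−1} such that n·w_n is bounded. Then for all sufficiently large n the block matrix M_n = [[β_n, b_n],[c_n, D_n]] is invertible, and the solution u_n = (u_n^1, u_n^·) ∈ ℝ × ℝ^{N−1} of M_n u_n = (v_n, w_n) satisfies u_n^1 → v/β and u_n^· → 0 as n → ∞. -/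
open Matrix Filter Topology

/-- A sequence with `n * f n` bounded tends to zero. -/
lemma aux_tendsto_zero_of_nmul_bdd {f : ℕ → ℝ} {C : ℝ}
    (h : ∀ n : ℕ, |(n : ℝ) * f n| ≤ C) : Tendsto f atTop (𝓝 0) := by
  have h1 : Tendsto (fun n : ℕ => ((n : ℝ))⁻¹) atTop (𝓝 0) :=
    tendsto_inv_atTop_zero.comp (tendsto_natCast_atTop_atTop (R := ℝ))
  have hinv : Tendsto (fun n : ℕ => C * ((n : ℝ))⁻¹) atTop (𝓝 0) := by
    simpa using h1.const_mul C
  apply squeeze_zero_norm' _ hinv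
  filter_upwards [eventually_ge_atTop 1] with n hn
  have hn' : (0 : ℝ) < n := by exact_mod_cast hn
  rw [Real.norm_eq_abs]
  have := h n
  calc |f n| = |(n : ℝ) * f n| * (n : ℝ)⁻¹ := by
        rw [abs_mul, abs_of_pos hn']; field_simp
    _ ≤ C * (n : ℝ)⁻¹ := by
        apply mul_le_mul_of_nonneg_right this (by positivity)

/-- Bounded times tendsto-zero tends to zero. -/
lemma aux_bdd_mul_tendsto_zero {f g : ℕ → ℝ} {C : ℝ}
    (hf : ∀ n, |f n| ≤ C) (hg : Tendsto g atTop (𝓝 0)) :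
    Tendsto (fun n => f n * g n) atTop (𝓝 0) := by
  have h0 : Tendsto (fun n => C * |g n|) atTop (𝓝 0) := by
    simpa using (hg.abs.const_mul C)
  apply squeeze_zero_norm _ h0
  intro n
  rw [Real.norm_eq_abs, abs_mul]
  exact mul_le_mul_of_nonneg_right (hf n) (abs_nonneg _)

/-- Schur-complement / Gauss elimination asymptotics for the block
matrices `Mₙ = [[βₙ, bₙ],[cₙ, Dₙ]]`. -/
theorem block_matrix_solution_limit
    (N : ℕ) (hN : 2 ≤ N)
    (β : ℕ → ℝ) (βl : ℝ)
    (hβ : Tendsto (fun n : ℕ => (n : ℝ) * β n) atTop (𝓝 βl)) (hβne : βl ≠ 0)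
    (b c : ℕ → Fin (N - 1) → ℝ)
    (hb : ∃ C : ℝ, ∀ (n : ℕ) (i : Fin (N - 1)), |(n : ℝ) * b n i| ≤ C)
    (hc : ∃ C : ℝ, ∀ (n : ℕ) (i : Fin (N - 1)), |(n : ℝ) * c n i| ≤ C)
    (D : ℕ → Matrix (Fin (N - 1)) (Fin (N - 1)) ℝ)
    (Dl : Matrix (Fin (N - 1)) (Fin (N - 1)) ℝ)
    (hD : ∀ i j, Tendsto (fun n => D n i j) atTop (𝓝 (Dl i j)))
    (hDl : IsUnit Dl.det)
    (v : ℕ → ℝ) (vl : ℝ) (hv : Tendsto (fun n : ℕ => (n : ℝ) * v n) atTop (𝓝 vl))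
    (w : ℕ → Fin (N - 1) → ℝ)
    (hw : ∃ C : ℝ, ∀ (n : ℕ) (i : Fin (N - 1)), |(n : ℝ) * w n i| ≤ C)
    (M : ℕ → Matrix (Fin 1 ⊕ Fin (N - 1)) (Fin 1 ⊕ Fin (N - 1)) ℝ)
    (hM : ∀ n, M n = Matrix.fromBlocks (Matrix.of fun _ _ => β n)
      (Matrix.of fun _ j => b n j) (Matrix.of fun i _ => c n i) (D n))
    (u : ℕ → Fin 1 ⊕ Fin (N - 1) → ℝ)
    (hu : ∀ n, u n = (M n)⁻¹ *ᵥ Sum.elim (fun _ => v n) (w n)) :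
    (∃ n₀ : ℕ, ∀ n ≥ n₀, IsUnit (M n).det) ∧
    Tendsto (fun n => u n (Sum.inl 0)) atTop (𝓝 (vl / βl)) ∧
    ∀ k, Tendsto (fun n => u n (Sum.inr k)) atTop (𝓝 0) := by
  obtain ⟨Cb, hb⟩ := hb
  obtain ⟨Cc, hc⟩ := hc
  obtain ⟨Cw, hw⟩ := hw
  have hb0 : ∀ i, Tendsto (fun n => b n i) atTop (𝓝 0) :=
    fun i => aux_tendsto_zero_of_nmul_bdd (fun n => hb n i)
  have hc0 : ∀ i, Tendsto (fun n => c n i) atTop (𝓝 0) :=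
    fun i => aux_tendsto_zero_of_nmul_bdd (fun n => hc n i)
  have hw0 : ∀ i, Tendsto (fun n => w n i) atTop (𝓝 0) :=
    fun i => aux_tendsto_zero_of_nmul_bdd (fun n => hw n i)
  have hD' : Tendsto D atTop (𝓝 Dl) := by
    apply tendsto_pi_nhds.2
    intro i
    rw [tendsto_pi_nhds]
    exact fun j => hD i j
  have hDlne : Dl.det ≠ 0 := hDl.ne_zero
  have hdet : Tendsto (fun n => (D n).det) atTop (𝓝 Dl.det) :=
    ((continuous_id.matrix_det).tendsto Dl).comp hD'
  have hdetev : ∀ᶠ n in atTop, (D n).det ≠ 0 := hdet.eventually_ne hDlne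
  have hinvc : ContinuousAt Ring.inverse Dl.det := by
    rw [Ring.inverse_eq_inv']
    exact continuousAt_inv₀ hDlne
  have hDinv : Tendsto (fun n => (D n)⁻¹) atTop (𝓝 Dl⁻¹) :=
    ((continuousAt_matrix_inv Dl hinvc).tendsto).comp hD'
  have hDinv' : ∀ i j, Tendsto (fun n => (D n)⁻¹ i j) atTop (𝓝 (Dl⁻¹ i j)) := by
    intro i j
    replace hDinv := tendsto_pi_nhds.1 hDinv
    have := hDinv i
    rw [tendsto_pi_nhds] at this
    exact this j
  set α : ℕ → ℝ := fun n => β n - b n ⬝ᵥ ((D n)⁻¹ *ᵥ c n) with hαdef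
  set q : ℕ → ℝ := fun n => b n ⬝ᵥ ((D n)⁻¹ *ᵥ w n) with hqdef
  -- n * (b ⬝ᵥ D⁻¹ c) → 0
  have hbc : Tendsto (fun n : ℕ => (n : ℝ) * (b n ⬝ᵥ ((D n)⁻¹ *ᵥ c n))) atTop (𝓝 0) := by
    have hterm : ∀ i j : Fin (N - 1),
        Tendsto (fun n : ℕ => ((n : ℝ) * b n i) * ((D n)⁻¹ i j * c n j)) atTop (𝓝 0) :=
      fun i j => aux_bdd_mul_tendsto_zero (fun n => hb n i)
        (by simpa using (hDinv' i j).mul (hc0 j))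
    have hsum := tendsto_finset_sum Finset.univ (fun i (_ : i ∈ Finset.univ) =>
      tendsto_finset_sum Finset.univ (fun j (_ : j ∈ Finset.univ) => hterm i j))
    simp only [Finset.sum_const_zero] at hsum
    apply hsum.congr
    intro n
    simp only [Matrix.mulVec, dotProduct, Finset.mul_sum]
    refine Finset.sum_congr rfl fun i _ => ?_
    exact Finset.sum_congr rfl fun j _ => by ring
  have hα : Tendsto (fun n : ℕ => (n : ℝ) * α n) atTop (𝓝 βl) := by
    have h := hβ.sub hbc
    rw [sub_zero] at h
    apply h.congr
    intro n
    simp only [hαdef]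
    ring
  -- n * q → 0
  have hq : Tendsto (fun n : ℕ => (n : ℝ) * q n) atTop (𝓝 0) := by
    have hterm : ∀ i j : Fin (N - 1),
        Tendsto (fun n : ℕ => ((n : ℝ) * w n j) * (b n i * (D n)⁻¹ i j)) atTop (𝓝 0) :=
      fun i j => aux_bdd_mul_tendsto_zero (fun n => hw n j)
        (by simpa using (hb0 i).mul (hDinv' i j))
    have hsum := tendsto_finset_sum Finset.univ (fun i (_ : i ∈ Finset.univ) =>
      tendsto_finset_sum Finset.univ (fun j (_ : j ∈ Finset.univ) => hterm i j))
    simp only [Finset.sum_const_zero] at hsum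
    apply hsum.congr
    intro n
    simp only [hqdef, Matrix.mulVec, dotProduct, Finset.mul_sum]
    refine Finset.sum_congr rfl fun i _ => ?_
    exact Finset.sum_congr rfl fun j _ => by ring
  have hαev : ∀ᶠ n : ℕ in atTop, (n : ℝ) * α n ≠ 0 := hα.eventually_ne hβne
  -- the key pointwise computation
  have key : ∀ n : ℕ, 1 ≤ n → (D n).det ≠ 0 → (n : ℝ) * α n ≠ 0 →
      IsUnit (M n).det ∧ u n (Sum.inl 0) = (v n - q n) / α n ∧
      ∀ k, u n (Sum.inr k) =
        ∑ j, (D n)⁻¹ k j * (w n j - u n (Sum.inl 0) * c n j) := by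
    intro n hn hDd hnα
    have hnR : ((n : ℝ)) ≠ 0 := Nat.cast_ne_zero.mpr (by omega)
    have hαn : α n ≠ 0 := by
      intro h
      exact hnα (by rw [h, mul_zero])
    haveI : Invertible (D n) := (D n).invertibleOfIsUnitDet (isUnit_iff_ne_zero.2 hDd)
    have hdetM : (M n).det = (D n).det * α n := by
      rw [hM n, Matrix.det_fromBlocks₂₂]
      congr 1
      rw [Matrix.det_fin_one]
      simp only [Matrix.sub_apply, Matrix.of_apply, invOf_eq_nonsing_inv, hαdef]
      congr 1
      simp only [Matrix.mul_apply, Matrix.of_apply, Matrix.mulVec, dotProduct,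
        Finset.sum_mul]
      rw [Finset.sum_comm]
      refine Finset.sum_congr rfl fun i _ => ?_
      rw [Finset.mul_sum]
      exact Finset.sum_congr rfl fun j _ => by ring
    have hMdet : IsUnit (M n).det := by
      rw [hdetM]
      exact isUnit_iff_ne_zero.2 (mul_ne_zero hDd hαn)
    refine ⟨hMdet, ?_⟩
    have hMu : M n *ᵥ u n = Sum.elim (fun _ => v n) (w n) := by
      rw [hu n, Matrix.mulVec_mulVec, Matrix.mul_nonsing_inv _ hMdet, Matrix.one_mulVec]
    have hrow2 : ∀ k, c n k * u n (Sum.inl 0) + ∑ j, D n k j * u n (Sum.inr j) = w n k := by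
      intro k
      have h := congrFun hMu (Sum.inr k)
      simpa [hM n, Matrix.mulVec, dotProduct, Fintype.sum_sum_type] using h
    have hrow1 : β n * u n (Sum.inl 0) + ∑ j, b n j * u n (Sum.inr j) = v n := by
      have h := congrFun hMu (Sum.inl 0)
      simpa [hM n, Matrix.mulVec, dotProduct, Fintype.sum_sum_type] using h
    have hDuv : D n *ᵥ (fun j => u n (Sum.inr j)) =
        fun k => w n k - u n (Sum.inl 0) * c n k := by
      funext k
      have h := hrow2 k
      simp only [Matrix.mulVec, dotProduct]
      linarith
    have huv : (fun j => u n (Sum.inr j)) =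
        (D n)⁻¹ *ᵥ (fun k => w n k - u n (Sum.inl 0) * c n k) := by
      rw [← hDuv, Matrix.mulVec_mulVec,
        Matrix.nonsing_inv_mul _ (isUnit_iff_ne_zero.2 hDd), Matrix.one_mulVec]
    have hthird : ∀ k, u n (Sum.inr k) =
        ∑ j, (D n)⁻¹ k j * (w n j - u n (Sum.inl 0) * c n j) := by
      intro k
      have h := congrFun huv k
      simpa [Matrix.mulVec, dotProduct] using h
    refine ⟨?_, hthird⟩
    have hx : ∑ j, b n j * u n (Sum.inr j) =
        q n - u n (Sum.inl 0) * (b n ⬝ᵥ ((D n)⁻¹ *ᵥ c n)) := by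
      calc ∑ j, b n j * u n (Sum.inr j)
          = ∑ j, b n j * (∑ k, (D n)⁻¹ j k * (w n k - u n (Sum.inl 0) * c n k)) := by
            refine Finset.sum_congr rfl fun j _ => ?_
            rw [hthird j]
        _ = ∑ j, (b n j * ∑ k, (D n)⁻¹ j k * w n k
              - u n (Sum.inl 0) * (b n j * ∑ k, (D n)⁻¹ j k * c n k)) := by
            refine Finset.sum_congr rfl fun j _ => ?_
            rw [Finset.mul_sum, Finset.mul_sum, Finset.mul_sum, Finset.mul_sum,
              ← Finset.sum_sub_distrib]
            exact Finset.sum_congr rfl fun k _ => by ring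
        _ = q n - u n (Sum.inl 0) * (b n ⬝ᵥ ((D n)⁻¹ *ᵥ c n)) := by
            rw [Finset.sum_sub_distrib, ← Finset.mul_sum]
            simp only [hqdef, dotProduct, Matrix.mulVec]
    have hkey1 : α n * u n (Sum.inl 0) = v n - q n := by
      simp only [hαdef]
      linear_combination hrow1 - hx
    rw [eq_div_iff hαn]
    linear_combination hkey1
  -- assemble conclusions
  have hgood : ∀ᶠ n in atTop,
      IsUnit (M n).det ∧ u n (Sum.inl 0) = (v n - q n) / α n ∧
      ∀ k, u n (Sum.inr k) =
        ∑ j, (D n)⁻¹ k j * (w n j - u n (Sum.inl 0) * c n j) := by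
    filter_upwards [eventually_ge_atTop 1, hdetev, hαev] with n h1 h2 h3
    exact key n h1 h2 h3
  have hu1 : Tendsto (fun n => u n (Sum.inl 0)) atTop (𝓝 (vl / βl)) := by
    have hfrac : Tendsto (fun n : ℕ => ((n : ℝ) * v n - (n : ℝ) * q n) / ((n : ℝ) * α n))
        atTop (𝓝 (vl / βl)) := by
      have h := (hv.sub hq).div hα hβne
      rw [sub_zero] at h
      exact h
    apply hfrac.congr'
    filter_upwards [hgood, eventually_ge_atTop 1] with n hg hn
    have hnR : ((n : ℝ)) ≠ 0 := Nat.cast_ne_zero.mpr (by omega)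
    rw [hg.2.1, ← mul_sub, mul_div_mul_left _ _ hnR]
  refine ⟨?_, hu1, ?_⟩
  · obtain ⟨n₀, hn₀⟩ := eventually_atTop.mp hgood
    exact ⟨n₀, fun n hn => (hn₀ n hn).1⟩
  · intro k
    have hterm : ∀ j, Tendsto
        (fun n => (D n)⁻¹ k j * (w n j - u n (Sum.inl 0) * c n j)) atTop (𝓝 0) := by
      intro j
      have := (hDinv' k j).mul ((hw0 j).sub (hu1.mul (hc0 j)))
      simpa using this
    have hsum := tendsto_finset_sum Finset.univ (fun j (_ : j ∈ Finset.univ) => hterm j)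
    simp only [Finset.sum_const_zero] at hsum
    apply hsum.congr'
    filter_upwards [hgood] with n hg
    exact (hg.2.2 k).symm
end

section
/- Fix λ > 0 and set s = √(2λ). Let M ≥ 1, 0 ≤ m < M, let p_1,…,p_M ≥ 0 with Σ_{j=1}^M p_j = 1, let l_1,…,l_m > 0, fix k ∈ {m+1,…,M}, and let φ₀, Φ, G ∈ ℝ. For x ≥ 0 define S(x) = 1/cosh(xs), R_j(x) = sinh((l_j − x)s)/sinh(l_j s) for 1 ≤ j ≤ m, and R_j(x) = e^{−xs} for m < j ≤ M. Suppose Ψ : [0, δ) → ℝ (δ > 0) is right-differentiable at 0 with right derivative Ψ′(0) = Φ·s, and suppose that for all x ∈ [0, δ): G = (p_k φ₀/λ)(1 − S(x)) + p_k S(x)Ψ(x) + G·Σ_{j=1}^M p_j S(x) R_j(x). Then G = p_k Φ / (Σ_{j=1}^m p_j coth(l_j s) + Σ_{j=m+1}^M p_j). -/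
open Real Finset

/-- the analytic core of Lemma 1, formula (8): solving the renewal
identity (11) by right-differentiation at `x = 0`. -/
theorem walsh_laplace_renewal_identity
    (lam : ℝ) (hlam : 0 < lam) (s : ℝ) (hs : s = Real.sqrt (2 * lam))
    (M m : ℕ) (hM : 1 ≤ M) (hm : m < M)
    (p : ℕ → ℝ) (hp : ∀ j ∈ Finset.Icc 1 M, 0 ≤ p j)
    (hpsum : ∑ j ∈ Finset.Icc 1 M, p j = 1)
    (l : ℕ → ℝ) (hl : ∀ j ∈ Finset.Icc 1 m, 0 < l j)
    (k : ℕ) (hk1 : m + 1 ≤ k) (hk2 : k ≤ M)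
    (φ₀ Φ G : ℝ) (δ : ℝ) (hδ : 0 < δ)
    (Ψ : ℝ → ℝ) (hΨ : HasDerivWithinAt Ψ (Φ * s) (Set.Ici 0) 0)
    (heq : ∀ x : ℝ, 0 ≤ x → x < δ →
      G = (p k * φ₀ / lam) * (1 - 1 / Real.cosh (x * s))
        + p k * (1 / Real.cosh (x * s)) * Ψ x
        + G * ∑ j ∈ Finset.Icc 1 M, p j * (1 / Real.cosh (x * s)) *
            (if j ≤ m then Real.sinh ((l j - x) * s) / Real.sinh (l j * s)
             else Real.exp (-(x * s)))) :
    G = p k * Φ /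
      (∑ j ∈ Finset.Icc 1 m, p j * (Real.cosh (l j * s) / Real.sinh (l j * s))
        + ∑ j ∈ Finset.Icc (m + 1) M, p j) := by
  have hs0 : 0 < s := by
    rw [hs]; exact Real.sqrt_pos.mpr (by linarith)
  -- the "effective coefficient" of ray j
  set c : ℕ → ℝ := fun j =>
    if j ≤ m then Real.cosh (l j * s) / Real.sinh (l j * s) else 1 with hc
  -- derivative of 1/cosh(x*s) at 0 is 0
  have hcosh_ne : ∀ x : ℝ, Real.cosh (x * s) ≠ 0 := fun x => (Real.cosh_pos _).ne'
  have hxs : HasDerivAt (fun x : ℝ => x * s) (1 * s) (0 : ℝ) :=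
    (hasDerivAt_id 0).mul_const s
  have hco : HasDerivAt (fun x : ℝ => Real.cosh (x * s))
      (Real.sinh (0 * s) * (1 * s)) 0 := hxs.cosh
  have hsech : HasDerivAt (fun x : ℝ => 1 / Real.cosh (x * s)) 0 0 := by
    have h := hco.inv (hcosh_ne 0)
    simp only [one_div]
    exact h.congr_deriv (by simp)
  -- derivative of the j-th "ray factor" at 0
  have hR : ∀ j ∈ Finset.Icc 1 M, HasDerivAt
      (fun x : ℝ => if j ≤ m then Real.sinh ((l j - x) * s) / Real.sinh (l j * s)
        else Real.exp (-(x * s))) (-s * c j) 0 := by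
    intro j hj
    by_cases hjm : j ≤ m
    · have hlj : 0 < l j := hl j (Finset.mem_Icc.mpr ⟨(Finset.mem_Icc.mp hj).1, hjm⟩)
      simp only [hjm, if_true, hc]
      have hin : HasDerivAt (fun x : ℝ => (l j - x) * s) ((0 - 1) * s) 0 :=
        ((hasDerivAt_const 0 (l j)).sub (hasDerivAt_id 0)).mul_const s
      have h := (hin.sinh).div_const (Real.sinh (l j * s))
      refine h.congr_deriv ?_
      simp only [sub_zero]
      ring
    · simp only [hjm, if_false, hc]
      have hin : HasDerivAt (fun x : ℝ => -(x * s)) (-(1 * s)) 0 := hxs.neg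
      have h := hin.exp
      convert h using 1
      simp
  -- derivative of the j-th summand at 0
  have hg : ∀ j ∈ Finset.Icc 1 M, HasDerivAt
      (fun x : ℝ => p j * (1 / Real.cosh (x * s)) *
        (if j ≤ m then Real.sinh ((l j - x) * s) / Real.sinh (l j * s)
         else Real.exp (-(x * s)))) (p j * (-s * c j)) 0 := by
    intro j hj
    have h := (hsech.const_mul (p j)).mul (hR j hj)
    exact h.congr_deriv (by simp)
  have hsum : HasDerivAt
      (fun x : ℝ => ∑ j ∈ Finset.Icc 1 M, p j * (1 / Real.cosh (x * s)) *
        (if j ≤ m then Real.sinh ((l j - x) * s) / Real.sinh (l j * s)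
         else Real.exp (-(x * s)))) (∑ j ∈ Finset.Icc 1 M, p j * (-s * c j)) 0 :=
    HasDerivAt.fun_sum hg
  -- the full right-hand side and its right derivative at 0
  set E : ℝ := ∑ j ∈ Finset.Icc 1 M, p j * c j with hE
  have hF : HasDerivWithinAt
      (fun x : ℝ => (p k * φ₀ / lam) * (1 - 1 / Real.cosh (x * s))
        + p k * (1 / Real.cosh (x * s)) * Ψ x
        + G * ∑ j ∈ Finset.Icc 1 M, p j * (1 / Real.cosh (x * s)) *
            (if j ≤ m then Real.sinh ((l j - x) * s) / Real.sinh (l j * s)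
             else Real.exp (-(x * s))))
      (p k * Φ * s - G * s * E) (Set.Ici 0) 0 := by
    have h1 : HasDerivAt (fun x : ℝ => (p k * φ₀ / lam) * (1 - 1 / Real.cosh (x * s)))
        ((p k * φ₀ / lam) * (0 - 0)) 0 :=
      ((hasDerivAt_const 0 (1 : ℝ)).sub hsech).const_mul _
    have h2 : HasDerivWithinAt (fun x : ℝ => p k * (1 / Real.cosh (x * s)) * Ψ x)
        ((p k * 0) * Ψ 0 + (p k * (1 / Real.cosh (0 * s))) * (Φ * s)) (Set.Ici 0) 0 :=
      ((hsech.const_mul (p k)).hasDerivWithinAt).mul hΨ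
    have h3 : HasDerivWithinAt
        (fun x : ℝ => G * ∑ j ∈ Finset.Icc 1 M, p j * (1 / Real.cosh (x * s)) *
            (if j ≤ m then Real.sinh ((l j - x) * s) / Real.sinh (l j * s)
             else Real.exp (-(x * s))))
        (G * ∑ j ∈ Finset.Icc 1 M, p j * (-s * c j)) (Set.Ici 0) 0 :=
      (hsum.const_mul G).hasDerivWithinAt
    have h := (h1.hasDerivWithinAt.add h2).add h3
    refine h.congr_deriv ?_
    symm
    simp only [zero_mul, Real.cosh_zero, mul_zero, zero_add, sub_zero, one_div_one, hE]
    rw [Finset.mul_sum]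
    have h4 : G * ∑ j ∈ Finset.Icc 1 M, p j * (-s * c j)
        = -∑ i ∈ Finset.Icc 1 M, G * s * (p i * c i) := by
      rw [Finset.mul_sum, ← Finset.sum_neg_distrib]
      exact Finset.sum_congr rfl fun j _ => by ring
    rw [h4]
    ring
  -- but the function is constantly G near 0 in Ici 0
  have hmem : Set.Ico (0 : ℝ) δ ∈ nhdsWithin 0 (Set.Ici 0) :=
    Ico_mem_nhdsGE hδ
  have hF0 : HasDerivWithinAt
      (fun x : ℝ => (p k * φ₀ / lam) * (1 - 1 / Real.cosh (x * s))
        + p k * (1 / Real.cosh (x * s)) * Ψ x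
        + G * ∑ j ∈ Finset.Icc 1 M, p j * (1 / Real.cosh (x * s)) *
            (if j ≤ m then Real.sinh ((l j - x) * s) / Real.sinh (l j * s)
             else Real.exp (-(x * s))))
      0 (Set.Ici 0) 0 := by
    refine (hasDerivWithinAt_const 0 _ G).congr_of_eventuallyEq
      (Filter.eventuallyEq_of_mem hmem fun x hx => (heq x hx.1 hx.2).symm)
      (heq 0 le_rfl hδ).symm
  have hu : UniqueDiffWithinAt ℝ (Set.Ici (0 : ℝ)) 0 :=
    uniqueDiffOn_Ici 0 0 Set.self_mem_Ici
  have hkey : p k * Φ * s - G * s * E = 0 := by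
    rw [← hF.derivWithin hu, hF0.derivWithin hu]
  -- split E into the marked and unmarked rays
  have hsplit : E = (∑ j ∈ Finset.Icc 1 m, p j * (Real.cosh (l j * s) / Real.sinh (l j * s)))
      + ∑ j ∈ Finset.Icc (m + 1) M, p j := by
    have h1 : (Finset.Icc 1 M : Finset ℕ) = Finset.Ioc 0 M := Finset.Icc_add_one_left_eq_Ioc 0 M
    have h2 : (Finset.Icc 1 m : Finset ℕ) = Finset.Ioc 0 m := Finset.Icc_add_one_left_eq_Ioc 0 m
    have h3 : (Finset.Icc (m + 1) M : Finset ℕ) = Finset.Ioc m M := Finset.Icc_add_one_left_eq_Ioc m M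
    rw [hE, h1, h2, h3, ← Finset.sum_Ioc_consecutive _ (Nat.zero_le m) hm.le]
    congr 1
    · exact Finset.sum_congr rfl fun j hj => by
        simp [hc, (Finset.mem_Ioc.mp hj).2]
    · exact Finset.sum_congr rfl fun j hj => by
        simp [hc, not_le.mpr (Finset.mem_Ioc.mp hj).1]
  -- E ≥ 1 > 0
  have hE1 : (1 : ℝ) ≤ E := by
    rw [← hpsum, hE]
    refine Finset.sum_le_sum fun j hj => ?_
    have hpj := hp j hj
    have hcj : 1 ≤ c j := by
      by_cases hjm : j ≤ m
      · simp only [hc, hjm, if_true]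
        have hlj : 0 < l j := hl j (Finset.mem_Icc.mpr ⟨(Finset.mem_Icc.mp hj).1, hjm⟩)
        have hsinh : 0 < Real.sinh (l j * s) := Real.sinh_pos_iff.mpr (by positivity)
        rw [le_div_iff₀ hsinh, one_mul]
        exact (Real.sinh_lt_cosh _).le
      · simp [hc, hjm]
    nlinarith
  have hE0 : E ≠ 0 := by linarith
  rw [← hsplit, eq_div_iff hE0]
  have hs' : s ≠ 0 := ne_of_gt hs0
  field_simp at hkey
  nlinarith [hkey, hs0]
end

section
/- Fix λ > 0 and set s = √(2λ). Let M ≥ 1, 1 ≤ m < M, let p_1,…,p_M ≥ 0 with Σ_{j=1}^M p_j = 1, let l_1,…,l_m > 0, fix k ∈ {1,…,m}, and let G¹ ∈ ℝ. For x ≥ 0 define S(x) = 1/cosh(xs), R_j(x) = sinh((l_j − x)s)/sinh(l_j s) for 1 ≤ j ≤ m, R_j(x) = e^{−xs} for m < j ≤ M, and R¹_k(x) = sinh(xs)/sinh(l_k s). Suppose that for all x in some interval [0, δ) with δ > 0: G¹ = p_k S(x) R¹_k(x) + G¹·Σ_{j=1}^M p_j S(x) R_j(x). Then G¹ = p_k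 / (sinh(l_k s)·(Σ_{j=1}^m p_j coth(l_j s) + Σ_{j=m+1}^M p_j)). -/
open Real Finset

/-- the analytic core of Lemma 1, formula (9): solving the renewal
identity (13) by right-differentiation at `x = 0`. -/
theorem walsh_exit_law_renewal_identity
    (lam : ℝ) (hlam : 0 < lam) (s : ℝ) (hs : s = Real.sqrt (2 * lam))
    (M m : ℕ) (hM : 1 ≤ M) (hm1 : 1 ≤ m) (hm : m < M)
    (p : ℕ → ℝ) (hp : ∀ j ∈ Finset.Icc 1 M, 0 ≤ p j)
    (hpsum : ∑ j ∈ Finset.Icc 1 M, p j = 1)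
    (l : ℕ → ℝ) (hl : ∀ j ∈ Finset.Icc 1 m, 0 < l j)
    (k : ℕ) (hk1 : 1 ≤ k) (hk2 : k ≤ m)
    (G₁ : ℝ) (δ : ℝ) (hδ : 0 < δ)
    (heq : ∀ x : ℝ, 0 ≤ x → x < δ →
      G₁ = p k * (1 / Real.cosh (x * s)) * (Real.sinh (x * s) / Real.sinh (l k * s))
        + G₁ * ∑ j ∈ Finset.Icc 1 M, p j * (1 / Real.cosh (x * s)) *
            (if j ≤ m then Real.sinh ((l j - x) * s) / Real.sinh (l j * s)
             else Real.exp (-(x * s)))) :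
    G₁ = p k / (Real.sinh (l k * s) *
      (∑ j ∈ Finset.Icc 1 m, p j * (Real.cosh (l j * s) / Real.sinh (l j * s))
        + ∑ j ∈ Finset.Icc (m + 1) M, p j)) := by
  have hs0 : 0 < s := by
    rw [hs]; exact Real.sqrt_pos.mpr (by linarith)
  obtain ⟨x, hx0, hxδ⟩ : ∃ x : ℝ, 0 < x ∧ x < δ := ⟨δ / 2, by positivity, by linarith⟩
  have hE := heq x hx0.le hxδ
  have hco : (0:ℝ) < Real.cosh (x * s) := Real.cosh_pos _
  have hsx : 0 < Real.sinh (x * s) := Real.sinh_pos_iff.mpr (by positivity)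
  set t := Real.sinh (x * s) / Real.cosh (x * s) with htdef
  have ht0 : 0 < t := div_pos hsx hco
  set c : ℕ → ℝ := fun j =>
    if j ≤ m then Real.cosh (l j * s) / Real.sinh (l j * s) else 1 with hcdef
  -- termwise rewrite of the sum
  have hterm : ∀ j ∈ Finset.Icc 1 M,
      p j * (1 / Real.cosh (x * s)) *
        (if j ≤ m then Real.sinh ((l j - x) * s) / Real.sinh (l j * s)
         else Real.exp (-(x * s))) = p j - t * (p j * c j) := by
    intro j hj
    by_cases hjm : j ≤ m
    · have hlj : 0 < l j := hl j (Finset.mem_Icc.mpr ⟨(Finset.mem_Icc.mp hj).1, hjm⟩)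
      have hsl : 0 < Real.sinh (l j * s) := Real.sinh_pos_iff.mpr (by positivity)
      simp only [hjm, if_true, hcdef, htdef]
      have hsub : Real.sinh ((l j - x) * s)
          = Real.sinh (l j * s) * Real.cosh (x * s)
            - Real.cosh (l j * s) * Real.sinh (x * s) := by
        rw [show (l j - x) * s = l j * s - x * s by ring, Real.sinh_sub]
      rw [hsub]
      field_simp
    · simp only [hjm, if_false, hcdef, htdef]
      field_simp
      rw [← Real.cosh_sub_sinh]
  rw [Finset.sum_congr rfl hterm, Finset.sum_sub_distrib, ← Finset.mul_sum, hpsum] at hE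
  -- split the sum ∑ p j * c j
  have hsplit : ∀ f : ℕ → ℝ, ∑ j ∈ Finset.Icc 1 M, f j
      = ∑ j ∈ Finset.Icc 1 m, f j + ∑ j ∈ Finset.Icc (m+1) M, f j := by
    intro f
    rw [show (1:ℕ) = 0 + 1 from rfl, Finset.Icc_add_one_left_eq_Ioc, Finset.Icc_add_one_left_eq_Ioc,
      zero_add, Finset.Icc_add_one_left_eq_Ioc, Finset.sum_Ioc_consecutive _ (Nat.zero_le m) hm.le]
  set C : ℝ := ∑ j ∈ Finset.Icc 1 m, p j * (Real.cosh (l j * s) / Real.sinh (l j * s))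
      + ∑ j ∈ Finset.Icc (m + 1) M, p j with hCdef
  have hCsum : ∑ j ∈ Finset.Icc 1 M, p j * c j = C := by
    rw [hsplit, hCdef]
    congr 1
    · exact Finset.sum_congr rfl fun j hj => by
        simp [hcdef, (Finset.mem_Icc.mp hj).2]
    · exact Finset.sum_congr rfl fun j hj => by
        have : ¬ j ≤ m := by
          have := (Finset.mem_Icc.mp hj).1; omega
        simp [hcdef, this]
  rw [hCsum] at hE
  have hsk : 0 < Real.sinh (l k * s) := by
    have hlk : 0 < l k := hl k (Finset.mem_Icc.mpr ⟨hk1, hk2⟩)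
    exact Real.sinh_pos_iff.mpr (by positivity)
  -- C ≥ 1
  have hC1 : (1:ℝ) ≤ C := by
    have h1 : ∑ j ∈ Finset.Icc 1 m, p j ≤ ∑ j ∈ Finset.Icc 1 m,
        p j * (Real.cosh (l j * s) / Real.sinh (l j * s)) := by
      apply Finset.sum_le_sum
      intro j hj
      have hjM : j ∈ Finset.Icc 1 M := by
        have := Finset.mem_Icc.mp hj
        exact Finset.mem_Icc.mpr ⟨this.1, this.2.trans hm.le⟩
      have hpj := hp j hjM
      have hlj : 0 < l j := hl j hj
      have hslj : 0 < Real.sinh (l j * s) := Real.sinh_pos_iff.mpr (by positivity)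
      have hge : (1:ℝ) ≤ Real.cosh (l j * s) / Real.sinh (l j * s) := by
        rw [le_div_iff₀ hslj, one_mul]
        exact (Real.sinh_lt_cosh _).le
      nlinarith
    have h2 : ∑ j ∈ Finset.Icc 1 m, p j + ∑ j ∈ Finset.Icc (m+1) M, p j = 1 := by
      rw [← hsplit]; exact hpsum
    rw [hCdef]; linarith
  have hC0 : 0 < C := lt_of_lt_of_le one_pos hC1
  -- From hE : G₁ = p k * (1/cosh) * (sinh/sinh(lk s)) + G₁ * (1 - t * C)
  have hkey : G₁ * C = p k / Real.sinh (l k * s) := by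
    have h : t * (p k / Real.sinh (l k * s) - G₁ * C) = 0 := by
      have : p k * (1 / Real.cosh (x * s)) * (Real.sinh (x * s) / Real.sinh (l k * s))
          = t * (p k / Real.sinh (l k * s)) := by
        rw [htdef]; field_simp
      rw [this] at hE
      linear_combination -hE
    have := mul_eq_zero.mp h
    rcases this with h' | h'
    · exact absurd h' ht0.ne'
    · linarith
  rw [eq_div_iff (by positivity)]
  rw [eq_div_iff hsk.ne'] at hkey
  linear_combination hkey
end

section
/- Let m ≥ 1, let q_1,…,q_m ≥ 0 and l_1,…,l_m > 0 with S := Σ_{j=1}^m q_j/l_j > 0, let c ∈ ℝ, and fix k ∈ {1,…,m}. Then lim_{ε→0+} (1/ε)·[ (q_k/sinh(l_k ε))·(Σ_{j=1}^m q_j coth(l_j ε) + c)^{−1} − (q_k/l_k)/S ] = − c·(q_k/l_k)/S². -/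
open Real Finset Filter Topology

private lemma aux_sinh_le (x : ℝ) (hx : 0 ≤ x) : Real.sinh x ≤ x * Real.cosh x := by
  have hmono : MonotoneOn (fun x : ℝ => x * Real.cosh x - Real.sinh x) (Set.Ici 0) := by
    have hd : ∀ y : ℝ, HasDerivAt (fun x : ℝ => x * Real.cosh x - Real.sinh x)
        (y * Real.sinh y) y := by
      intro y
      have h1 : HasDerivAt (fun x : ℝ => x * Real.cosh x)
          (1 * Real.cosh y + y * Real.sinh y) y :=
        (hasDerivAt_id y).mul (Real.hasDerivAt_cosh y)
      have := h1.sub (Real.hasDerivAt_sinh y)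
      exact this.congr_deriv (by ring)
    apply monotoneOn_of_deriv_nonneg (convex_Ici 0)
    · exact (Continuous.continuousOn (by continuity))
    · intro y hy
      exact (hd y).differentiableAt.differentiableWithinAt
    · intro y hy
      rw [(hd y).deriv]
      rw [interior_Ici] at hy
      exact mul_nonneg (le_of_lt hy) (le_of_lt (Real.sinh_pos_iff.2 hy))
  have := hmono (Set.self_mem_Ici) (Set.mem_Ici.2 hx) hx
  simp only [Real.cosh_zero, Real.sinh_zero, mul_zero, zero_mul, sub_zero, zero_sub] at this
  linarith

private lemma aux_cosh_le (x : ℝ) (hx : 0 ≤ x) : Real.cosh x - 1 ≤ x * Real.sinh x := by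
  have hmono : MonotoneOn (fun x : ℝ => x * Real.sinh x - Real.cosh x) (Set.Ici 0) := by
    have hd : ∀ y : ℝ, HasDerivAt (fun x : ℝ => x * Real.sinh x - Real.cosh x)
        (y * Real.cosh y) y := by
      intro y
      have h1 : HasDerivAt (fun x : ℝ => x * Real.sinh x)
          (1 * Real.sinh y + y * Real.cosh y) y :=
        (hasDerivAt_id y).mul (Real.hasDerivAt_sinh y)
      have := h1.sub (Real.hasDerivAt_cosh y)
      exact this.congr_deriv (by ring)
    apply monotoneOn_of_deriv_nonneg (convex_Ici 0)
    · exact (Continuous.continuousOn (by continuity))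
    · intro y hy
      exact (hd y).differentiableAt.differentiableWithinAt
    · intro y hy
      rw [(hd y).deriv]
      rw [interior_Ici] at hy
      exact mul_nonneg (le_of_lt hy) (le_of_lt (Real.cosh_pos y))
  have := hmono (Set.self_mem_Ici) (Set.mem_Ici.2 hx) hx
  simp only [Real.cosh_zero, Real.sinh_zero, mul_zero, zero_mul, zero_sub] at this
  linarith

private lemma aux_tendsto_A :
    Tendsto (fun x : ℝ => (x * Real.cosh x - Real.sinh x) / (x * Real.sinh x))
      (𝓝[>] (0:ℝ)) (𝓝 0) := by
  apply HasDerivAt.lhopital_zero_nhdsGT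
    (f' := fun x : ℝ => x * Real.sinh x) (g' := fun x : ℝ => Real.sinh x + x * Real.cosh x)
  · filter_upwards with x
    have h1 : HasDerivAt (fun x : ℝ => x * Real.cosh x)
        (1 * Real.cosh x + x * Real.sinh x) x :=
      (hasDerivAt_id x).mul (Real.hasDerivAt_cosh x)
    have := h1.sub (Real.hasDerivAt_sinh x)
    exact this.congr_deriv (by ring)
  · filter_upwards with x
    have h1 : HasDerivAt (fun x : ℝ => x * Real.sinh x)
        (1 * Real.sinh x + x * Real.cosh x) x :=
      (hasDerivAt_id x).mul (Real.hasDerivAt_sinh x)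
    convert h1 using 1; ring
  · filter_upwards [self_mem_nhdsWithin] with x (hx : 0 < x)
    have := Real.sinh_pos_iff.2 hx
    have := Real.cosh_pos x
    positivity
  · have : Tendsto (fun x : ℝ => x * Real.cosh x - Real.sinh x) (𝓝 (0:ℝ)) (𝓝 0) := by
      have : Continuous (fun x : ℝ => x * Real.cosh x - Real.sinh x) := by continuity
      simpa using this.tendsto 0
    exact this.mono_left nhdsWithin_le_nhds
  · have : Tendsto (fun x : ℝ => x * Real.sinh x) (𝓝 (0:ℝ)) (𝓝 0) := by
      have : Continuous (fun x : ℝ => x * Real.sinh x) := by continuity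
      simpa using this.tendsto 0
    exact this.mono_left nhdsWithin_le_nhds
  · apply squeeze_zero'
        (g := fun x : ℝ => x)
    · filter_upwards [self_mem_nhdsWithin] with x (hx : 0 < x)
      have hs := Real.sinh_pos_iff.2 hx
      have hc := Real.cosh_pos x
      positivity
    · filter_upwards [self_mem_nhdsWithin] with x (hx : 0 < x)
      have hs := Real.sinh_pos_iff.2 hx
      have hc := Real.cosh_pos x
      have hden : Real.sinh x ≤ Real.sinh x + x * Real.cosh x := by nlinarith
      calc x * Real.sinh x / (Real.sinh x + x * Real.cosh x)
          ≤ x * Real.sinh x / Real.sinh x := by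
            apply div_le_div_of_nonneg_left (by positivity) hs hden
        _ = x := by field_simp
    · exact tendsto_id.mono_left nhdsWithin_le_nhds

private lemma aux_tendsto_B :
    Tendsto (fun x : ℝ => (x - Real.sinh x) / (x * Real.sinh x))
      (𝓝[>] (0:ℝ)) (𝓝 0) := by
  apply HasDerivAt.lhopital_zero_nhdsGT
    (f' := fun x : ℝ => 1 - Real.cosh x) (g' := fun x : ℝ => Real.sinh x + x * Real.cosh x)
  · filter_upwards with x
    exact (hasDerivAt_id x).sub (Real.hasDerivAt_sinh x)
  · filter_upwards with x
    have h1 : HasDerivAt (fun x : ℝ => x * Real.sinh x)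
        (1 * Real.sinh x + x * Real.cosh x) x :=
      (hasDerivAt_id x).mul (Real.hasDerivAt_sinh x)
    convert h1 using 1; ring
  · filter_upwards [self_mem_nhdsWithin] with x (hx : 0 < x)
    have := Real.sinh_pos_iff.2 hx
    have := Real.cosh_pos x
    positivity
  · have : Tendsto (fun x : ℝ => x - Real.sinh x) (𝓝 (0:ℝ)) (𝓝 0) := by
      have : Continuous (fun x : ℝ => x - Real.sinh x) := by continuity
      simpa using this.tendsto 0
    exact this.mono_left nhdsWithin_le_nhds
  · have : Tendsto (fun x : ℝ => x * Real.sinh x) (𝓝 (0:ℝ)) (𝓝 0) := by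
      have : Continuous (fun x : ℝ => x * Real.sinh x) := by continuity
      simpa using this.tendsto 0
    exact this.mono_left nhdsWithin_le_nhds
  · apply squeeze_zero_norm' (a := fun x : ℝ => x)
    · filter_upwards [self_mem_nhdsWithin] with x (hx : 0 < x)
      have hs := Real.sinh_pos_iff.2 hx
      have hc := Real.cosh_pos x
      have h1 : 1 ≤ Real.cosh x := Real.one_le_cosh x
      have hcl := aux_cosh_le x hx.le
      rw [Real.norm_eq_abs, abs_div, abs_of_nonpos (by linarith), abs_of_pos (by nlinarith)]
      rw [div_le_iff₀ (by nlinarith)]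
      nlinarith [mul_nonneg (mul_nonneg hx.le hx.le) hc.le]
    · exact tendsto_id.mono_left nhdsWithin_le_nhds

private lemma aux_map_pos (a : ℝ) (ha : 0 < a) :
    Tendsto (fun ε : ℝ => a * ε) (𝓝[>] (0:ℝ)) (𝓝[>] (0:ℝ)) := by
  apply tendsto_nhdsWithin_of_tendsto_nhds_of_eventually_within
  · have : Tendsto (fun ε : ℝ => a * ε) (𝓝 (0:ℝ)) (𝓝 (a * 0)) :=
      (continuous_const.mul continuous_id).tendsto 0
    simpa using this.mono_left nhdsWithin_le_nhds
  · filter_upwards [self_mem_nhdsWithin] with ε (hε : 0 < ε)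
    exact Set.mem_Ioi.2 (by positivity)

/-- second-order asymptotics underlying formula (15). -/
theorem coth_sum_inverse_second_order_asymptotics
    (m : ℕ) (hm : 1 ≤ m) (q l : ℕ → ℝ)
    (hq : ∀ j ∈ Finset.Icc 1 m, 0 ≤ q j) (hl : ∀ j ∈ Finset.Icc 1 m, 0 < l j)
    (S : ℝ) (hS : S = ∑ j ∈ Finset.Icc 1 m, q j / l j) (hSpos : 0 < S) (c : ℝ)
    (k : ℕ) (hk1 : 1 ≤ k) (hk2 : k ≤ m) :
    Tendsto (fun ε : ℝ => (1 / ε) *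
        ((q k / Real.sinh (l k * ε)) *
            (∑ j ∈ Finset.Icc 1 m, q j * (Real.cosh (l j * ε) / Real.sinh (l j * ε)) + c)⁻¹
          - (q k / l k) / S))
      (𝓝[>] 0) (𝓝 (-(c * ((q k / l k) / S ^ 2)))) := by
  have hkm : k ∈ Finset.Icc 1 m := Finset.mem_Icc.2 ⟨hk1, hk2⟩
  have hlk : 0 < l k := hl k hkm
  set N0 : ℝ := q k / l k with hN0
  set N : ℝ → ℝ := fun ε => ε * (q k / Real.sinh (l k * ε)) with hNdef
  set D : ℝ → ℝ := fun ε =>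
    (∑ j ∈ Finset.Icc 1 m, q j * (ε * (Real.cosh (l j * ε) / Real.sinh (l j * ε)))) + c * ε
    with hDdef
  -- N asymptotics
  have hN : Tendsto (fun ε => (N ε - N0) / ε) (𝓝[>] (0:ℝ)) (𝓝 0) := by
    have hcomp := aux_tendsto_B.comp (aux_map_pos (l k) hlk)
    have : Tendsto (fun ε : ℝ =>
        q k * ((l k * ε - Real.sinh (l k * ε)) / (l k * ε * Real.sinh (l k * ε))))
        (𝓝[>] (0:ℝ)) (𝓝 (q k * 0)) := hcomp.const_mul (q k)
    rw [mul_zero] at this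
    apply this.congr'
    filter_upwards [self_mem_nhdsWithin] with ε (hε : 0 < ε)
    have hsp := Real.sinh_pos_iff.2 (mul_pos hlk hε)
    simp only [hNdef, hN0]
    field_simp
  -- D asymptotics
  have hDterm : ∀ j ∈ Finset.Icc 1 m, Tendsto (fun ε : ℝ =>
      (q j * (ε * (Real.cosh (l j * ε) / Real.sinh (l j * ε))) - q j / l j) / ε)
      (𝓝[>] (0:ℝ)) (𝓝 0) := by
    intro j hj
    have hlj := hl j hj
    have hcomp := aux_tendsto_A.comp (aux_map_pos (l j) hlj)
    have : Tendsto (fun ε : ℝ =>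
        q j * ((l j * ε * Real.cosh (l j * ε) - Real.sinh (l j * ε)) /
          (l j * ε * Real.sinh (l j * ε))))
        (𝓝[>] (0:ℝ)) (𝓝 (q j * 0)) := hcomp.const_mul (q j)
    rw [mul_zero] at this
    apply this.congr'
    filter_upwards [self_mem_nhdsWithin] with ε (hε : 0 < ε)
    have hsp := Real.sinh_pos_iff.2 (mul_pos hlj hε)
    field_simp
  have hD : Tendsto (fun ε => (D ε - S) / ε) (𝓝[>] (0:ℝ)) (𝓝 c) := by
    have hsum : Tendsto (fun ε : ℝ => (∑ j ∈ Finset.Icc 1 m,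
        (q j * (ε * (Real.cosh (l j * ε) / Real.sinh (l j * ε))) - q j / l j) / ε) + c)
        (𝓝[>] (0:ℝ)) (𝓝 (0 + c)) := by
      have h0 := (tendsto_finset_sum (Finset.Icc 1 m) hDterm).add_const c
      simpa using h0
    rw [zero_add] at hsum
    apply hsum.congr'
    filter_upwards [self_mem_nhdsWithin] with ε (hε : 0 < ε)
    simp only [hDdef, hS]
    rw [← Finset.sum_div, Finset.sum_sub_distrib]
    field_simp
    rw [Finset.sum_congr rfl fun x _ => (by ring : q x * ε * cosh (ε * l x) / sinh (ε * l x)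
      = ε * q x * cosh (ε * l x) / sinh (ε * l x))]
    ring
  have hDlim : Tendsto D (𝓝[>] (0:ℝ)) (𝓝 S) := by
    have h1 : Tendsto (fun ε : ℝ => S + ε * ((D ε - S) / ε)) (𝓝[>] (0:ℝ)) (𝓝 (S + 0 * c)) :=
      tendsto_const_nhds.add ((tendsto_id.mono_left nhdsWithin_le_nhds).mul hD)
    rw [zero_mul, add_zero] at h1
    apply h1.congr'
    filter_upwards [self_mem_nhdsWithin] with ε (hε : 0 < ε)
    field_simp
    ring
  have hDne : ∀ᶠ ε in 𝓝[>] (0:ℝ), D ε ≠ 0 := hDlim.eventually_ne (ne_of_gt hSpos)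
  -- combine
  have hSne : S ≠ 0 := ne_of_gt hSpos
  have hG : Tendsto (fun ε : ℝ =>
      (((N ε - N0) / ε) * S - N0 * ((D ε - S) / ε)) / (D ε * S))
      (𝓝[>] (0:ℝ)) (𝓝 ((0 * S - N0 * c) / (S * S))) := by
    exact ((hN.mul_const S).sub (hD.const_mul N0)).div (hDlim.mul_const S)
      (by positivity)
  have hval : (0 * S - N0 * c) / (S * S) = -(c * (N0 / S ^ 2)) := by
    field_simp
    ring
  rw [hval] at hG
  apply hG.congr'
  filter_upwards [self_mem_nhdsWithin, hDne] with ε (hε : 0 < ε) hDne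
  have hεne : ε ≠ 0 := ne_of_gt hε
  have hsum_eq : (∑ j ∈ Finset.Icc 1 m, q j * (Real.cosh (l j * ε) / Real.sinh (l j * ε))) + c
      = D ε / ε := by
    simp only [hDdef]
    rw [eq_div_iff hεne, add_mul, Finset.sum_mul]
    rw [Finset.sum_congr rfl fun j (hj : j ∈ Finset.Icc 1 m) =>
      show q j * (Real.cosh (l j * ε) / Real.sinh (l j * ε)) * ε
         = q j * (ε * (Real.cosh (l j * ε) / Real.sinh (l j * ε))) from by ring]
  have hq_eq : q k / Real.sinh (l k * ε) = N ε / ε := by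
    simp only [hNdef]
    exact (mul_div_cancel_left₀ _ hεne).symm
  rw [hsum_eq, hq_eq]
  field_simp
  ring
end
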